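/- Let I ≥ 1, q > 0, c > 0, and for each i = 1,…,I let S_i > 0, A_i > S_i, R_i > 0, and B_i ≥ 0. Define V(p_1,…,p_I) = Σ_{i=1}^I (p_i − c)·( S_i·(R_i + B_i)/(A_i·p_i) + S_i/(A_i·q) − 1/q ) on (0, ∞)^I. Then V has a unique maximizer on (0, ∞)^I, given componentwise by p_i* = √( q·c·S_i·(R_i + B_i)/(A_i − S_i) ). -/

import Mathlib

lemma key_aux (q c SS AA RB : ℝ) (hq : 0 < q) (hS : 0 < SS)
    (hAS : SS < AA) (s x : ℝ) (hs : 0 < s)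
    (hs2 : s ^ 2 * (AA - SS) = q * c * SS * RB) (hx : 0 < x) :
    (s - c) * (SS * RB / (AA * s) + SS / (AA * q) - 1 / q)
      - (x - c) * (SS * RB / (AA * x) + SS / (AA * q) - 1 / q)
      = (AA - SS) / (AA * q) * (x - s) ^ 2 / x := by
  have hAA : 0 < AA := hS.trans hAS
  have h1 : s ≠ 0 := hs.ne'
  have h2 : x ≠ 0 := hx.ne'
  have h3 : AA ≠ 0 := hAA.ne'
  have h4 : q ≠ 0 := hq.ne'
  field_simp
  linear_combination (x - s) * hs2

/-- The RSU total utility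
`V(p) = Σ_i (p_i − c)·(S_i·(R_i + B_i)/(A_i·p_i) + S_i/(A_i·q) − 1/q)` has a unique
maximizer on `(0, ∞)^I`, given componentwise by
`p_i* = √(q·c·S_i·(R_i + B_i)/(A_i − S_i))`. -/
theorem stmt12 (I : ℕ) (hI : 1 ≤ I) (q c : ℝ) (hq : 0 < q) (hc : 0 < c)
    (S A R B : Fin I → ℝ) (hS : ∀ i, 0 < S i) (hA : ∀ i, S i < A i)
    (hR : ∀ i, 0 < R i) (hB : ∀ i, 0 ≤ B i)
    (V : (Fin I → ℝ) → ℝ)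
    (hV : ∀ p, V p =
      ∑ i, (p i - c) * (S i * (R i + B i) / (A i * p i) + S i / (A i * q) - 1 / q))
    (pstar : Fin I → ℝ)
    (hpstar : ∀ i, pstar i = Real.sqrt (q * c * S i * (R i + B i) / (A i - S i))) :
    (∀ i, 0 < pstar i) ∧
    ∀ p : Fin I → ℝ, (∀ i, 0 < p i) → V p ≤ V pstar ∧ (V p = V pstar → p = pstar) := by
  have hRB : ∀ i, 0 < R i + B i := fun i => by have := hR i; have := hB i; linarith
  have hD : ∀ i, 0 < A i - S i := fun i => by have := hA i; linarith
  have hE : ∀ i, 0 < q * c * S i * (R i + B i) / (A i - S i) := fun i => by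
    have := hS i; have := hRB i; have := hD i; positivity
  have hpos : ∀ i, 0 < pstar i := fun i => by
    rw [hpstar i]; exact Real.sqrt_pos.mpr (hE i)
  have hsq : ∀ i, (pstar i) ^ 2 * (A i - S i) = q * c * S i * (R i + B i) := fun i => by
    rw [hpstar i, Real.sq_sqrt (hE i).le, div_mul_cancel₀ _ (hD i).ne']
  refine ⟨hpos, fun p hp => ?_⟩
  -- the termwise gap
  have hgap : ∀ i,
      (pstar i - c) * (S i * (R i + B i) / (A i * pstar i) + S i / (A i * q) - 1 / q)
        - (p i - c) * (S i * (R i + B i) / (A i * p i) + S i / (A i * q) - 1 / q)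
      = (A i - S i) / (A i * q) * (p i - pstar i) ^ 2 / (p i) := fun i =>
    key_aux q c (S i) (A i) (R i + B i) hq (hS i) (hA i) (pstar i) (p i)
      (hpos i) (hsq i) (hp i)
  have hgapnn : ∀ i, 0 ≤ (A i - S i) / (A i * q) * (p i - pstar i) ^ 2 / (p i) := fun i => by
    have h1 := hD i; have h2 := (hS i).trans (hA i); have h3 := hp i
    positivity
  have hdiff : V pstar - V p
      = ∑ i, (A i - S i) / (A i * q) * (p i - pstar i) ^ 2 / (p i) := by
    rw [hV, hV, ← Finset.sum_sub_distrib]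
    exact Finset.sum_congr rfl fun i _ => hgap i
  constructor
  · have : 0 ≤ V pstar - V p := by
      rw [hdiff]
      exact Finset.sum_nonneg fun i _ => hgapnn i
    linarith
  · intro hVeq
    have hzero : ∑ i, (A i - S i) / (A i * q) * (p i - pstar i) ^ 2 / (p i) = 0 := by
      rw [← hdiff, hVeq]; ring
    have heach := (Finset.sum_eq_zero_iff_of_nonneg (fun i _ => hgapnn i)).mp hzero
    funext i
    have h := heach i (Finset.mem_univ i)
    have h1 := hD i
    have h2 := (hS i).trans (hA i)
    have h3 := hp i
    have hco : 0 < (A i - S i) / (A i * q) / (p i) := by positivity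
    have : (p i - pstar i) ^ 2 = 0 := by
      by_contra hne
      have hsqpos : 0 < (p i - pstar i) ^ 2 := lt_of_le_of_ne (sq_nonneg _) (Ne.symm hne)
      have : 0 < (A i - S i) / (A i * q) * (p i - pstar i) ^ 2 / (p i) := by positivity
      linarith
    have := pow_eq_zero_iff (n := 2) (by norm_num) |>.mp this
    linarith
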